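/- arXiv:1305.2472 — 2 statements merged into one kernel-verified Lean document; each statement's English description precedes it below -/
import Mathlib

section
/- There exist constants c > 0 and γ > 0 such that for all integers 1 ≤ l < m and all subsets S, S' ⊆ 𝕄, | ⟨Ψ, M^{l−1} M_S M^{m−l−1} M_{S'} Ψ⟩ − ⟨Ψ, M^{l−1} M_S Ψ⟩ · ⟨Ψ, M^{m−1} M_{S'} Ψ⟩ | ≤ c e^{−γ(m−l)}. (In the repeated measurement interpretation this says |P(X_l ∈ S, X_m ∈ S') − P(X_l ∈ S)·P(X_m ∈ S')| ≤ c e^{−γ(m−l)}: the outcomes of measurements performed at times l and m become exponentially decorrelated as m − l grows.) -/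
open scoped Matrix
open Complex
open scoped ENNReal NNReal

noncomputable section

private lemma aux_pow_norm_decay {A : Type*} [NormedRing A] [NormedAlgebra ℂ A]
    [CompleteSpace A] (a : A) (h : spectralRadius ℂ a < 1) :
    ∃ C : ℝ, 1 ≤ C ∧ ∃ r : ℝ, 0 < r ∧ r < 1 ∧ ∀ n : ℕ, ‖a ^ n‖ ≤ C * r ^ n := by
  obtain ⟨ρ, hρ1, hρ2⟩ := exists_between h
  have hρ0 : 0 < ρ := lt_of_le_of_lt zero_le hρ1
  have hρtop : ρ ≠ ⊤ := (hρ2.trans ENNReal.one_lt_top).ne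
  set r : ℝ := ρ.toReal with hrdef
  have hr0 : 0 < r := ENNReal.toReal_pos hρ0.ne' hρtop
  have hr1 : r < 1 := by
    have := (ENNReal.toReal_lt_toReal hρtop ENNReal.one_ne_top).mpr hρ2
    simpa using this
  have hev := (spectrum.pow_nnnorm_pow_one_div_tendsto_nhds_spectralRadius a).eventually_lt_const hρ1
  obtain ⟨N, hN⟩ := Filter.eventually_atTop.mp hev
  have hbig : ∀ n, max N 1 ≤ n → ‖a ^ n‖ ≤ r ^ n := by
    intro n hn
    have hn1 : 1 ≤ n := le_trans (le_max_right _ _) hn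
    have hx := hN n (le_trans (le_max_left _ _) hn)
    have hnne : (n : ℝ) ≠ 0 := by positivity
    have hxn : ((‖a ^ n‖₊ : ℝ≥0∞) ^ (1 / (n : ℝ))) ^ (n : ℝ) ≤ ρ ^ (n : ℝ) :=
      ENNReal.rpow_le_rpow hx.le (by positivity)
    rw [← ENNReal.rpow_mul, one_div, inv_mul_cancel₀ hnne, ENNReal.rpow_one,
      ENNReal.rpow_natCast] at hxn
    have := ENNReal.toReal_mono (ENNReal.pow_ne_top hρtop) hxn
    simpa [hrdef, ENNReal.toReal_pow] using this
  have hsum0 : (0:ℝ) ≤ ∑ i ∈ Finset.range (max N 1), ‖a ^ i‖ / r ^ i :=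
    Finset.sum_nonneg (fun i _ => by positivity)
  refine ⟨1 + ∑ i ∈ Finset.range (max N 1), ‖a ^ i‖ / r ^ i,
    le_add_of_nonneg_right hsum0, r, hr0, hr1, ?_⟩
  intro n
  rcases lt_or_ge n (max N 1) with hlt | hge
  · have hmem : n ∈ Finset.range (max N 1) := Finset.mem_range.mpr hlt
    have hle : ‖a ^ n‖ / r ^ n ≤ ∑ i ∈ Finset.range (max N 1), ‖a ^ i‖ / r ^ i :=
      Finset.single_le_sum (f := fun i => ‖a ^ i‖ / r ^ i) (fun i _ => by positivity) hmem
    have hrn : (0:ℝ) < r ^ n := by positivity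
    rw [div_le_iff₀ hrn] at hle
    nlinarith [norm_nonneg (a ^ n), pow_pos hr0 n]
  · have := hbig n hge
    nlinarith [pow_pos hr0 n]


private lemma aux_proj (D : ℕ) (M : Matrix (Fin D) (Fin D) ℂ) (Ψ : Fin D → ℂ) (hΨ : Ψ ≠ 0)
    (hinv : M.mulVec Ψ = Ψ)
    (hspec1 : ∀ z ∈ spectrum ℂ M, ‖z‖ ≤ 1)
    (hspec2 : ∀ z ∈ spectrum ℂ M, ‖z‖ = 1 → z = 1)
    (hsimple : Module.finrank ℂ
      (Module.End.maxGenEigenspace (Matrix.mulVecLin M) 1) = 1) :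
    ∃ P : Matrix (Fin D) (Fin D) ℂ,
      M * P = P ∧ P * M = P ∧ P * P = P ∧ P.mulVec Ψ = Ψ ∧
      (∀ v : Fin D → ℂ, ∃ c : ℂ, P.mulVec v = c • Ψ) ∧
      (∀ z ∈ spectrum ℂ (M - P), ‖z‖ < 1) := by
  classical
  set f : Module.End ℂ (Fin D → ℂ) := M.mulVecLin with hfdef
  set g : Module.End ℂ (Fin D → ℂ) := f - 1 with hgdef
  have hgapp : ∀ v, g v = f v - v := fun v => rfl
  have hfΨ : f Ψ = Ψ := hinv
  have hΨK : Ψ ∈ LinearMap.ker g := by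
    rw [LinearMap.mem_ker, hgapp, hfΨ, sub_self]
  -- membership in the maximal generalized eigenspace
  have hmem : ∀ v : Fin D → ℂ, (∃ k : ℕ, (g ^ k) v = 0) → v ∈ f.maxGenEigenspace 1 := by
    intro v hv
    rw [Module.End.mem_maxGenEigenspace]
    simpa only [hgdef, one_smul] using hv
  have key : ∀ v w : Fin D → ℂ, g v = 0 → g w = v → v = 0 := by
    intro v w hv hw
    by_contra hvne
    have hvmem : v ∈ f.maxGenEigenspace 1 := hmem v ⟨1, by simpa using hv⟩
    have hwmem : w ∈ f.maxGenEigenspace 1 := hmem w ⟨2, by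
      rw [pow_succ, pow_one, Module.End.mul_apply, hw, hv]⟩
    have hspan : (ℂ ∙ v) = f.maxGenEigenspace 1 := by
      apply Submodule.eq_of_le_of_finrank_le
      · rwa [Submodule.span_singleton_le_iff_mem]
      · rw [hsimple, finrank_span_singleton hvne]
    obtain ⟨c, hc⟩ := Submodule.mem_span_singleton.mp (hspan ▸ hwmem)
    apply hvne
    have hgw : g w = c • g v := by rw [← hc, map_smul]
    rw [hw, hv, smul_zero] at hgw
    exact hgw
  have hdisj : Disjoint (LinearMap.ker g) (LinearMap.range g) := by
    rw [Submodule.disjoint_def]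
    rintro v hv ⟨w, hw⟩
    exact key v w (LinearMap.mem_ker.mp hv) hw
  have hcompl : IsCompl (LinearMap.ker g) (LinearMap.range g) := by
    refine ⟨hdisj, codisjoint_iff.mpr ?_⟩
    apply Submodule.eq_top_of_disjoint _ _ _ hdisj
    rw [add_comm]
    exact (LinearMap.finrank_range_add_finrank_ker g).ge
  set K := LinearMap.ker g with hKdef
  set π := K.linearProjOfIsCompl (LinearMap.range g) hcompl with hπdef
  set p : Module.End ℂ (Fin D → ℂ) := K.subtype ∘ₗ π with hpdef
  have hpapp : ∀ v, p v = (π v : Fin D → ℂ) := fun v => rfl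
  have hpK : ∀ v (hv : v ∈ K), p v = v := by
    intro v hv
    rw [hpapp]
    rw [show π v = ⟨v, hv⟩ from Submodule.linearProjOfIsCompl_apply_left hcompl ⟨v, hv⟩]
  have hpW : ∀ v, v ∈ LinearMap.range g → p v = 0 := by
    intro v hv
    rw [hpapp, show π v = 0 from Submodule.projectionOnto_apply_of_mem_right hcompl hv,
      Submodule.coe_zero]
  have hpmem : ∀ v, p v ∈ K := fun v => SetLike.coe_mem (π v)
  have hfp : ∀ v, f (p v) = p v := by
    intro v
    have := LinearMap.mem_ker.mp (hpmem v)
    rw [hgapp] at this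
    exact sub_eq_zero.mp this
  have hpf : ∀ v, p (f v) = p v := by
    intro v
    have : f v = v + g v := by rw [hgapp]; ring
    rw [this, map_add, hpW (g v) ⟨v, rfl⟩, add_zero]
  have hpp : ∀ v, p (p v) = p v := fun v => hpK _ (hpmem v)
  have hpΨ : p Ψ = Ψ := hpK Ψ hΨK
  -- K is the span of Ψ
  have hKle : K ≤ f.maxGenEigenspace 1 := by
    intro x hx
    exact hmem x ⟨1, by simpa using LinearMap.mem_ker.mp hx⟩
  have hKspan : (ℂ ∙ Ψ) = K := by
    apply Submodule.eq_of_le_of_finrank_le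
    · rwa [Submodule.span_singleton_le_iff_mem]
    · rw [finrank_span_singleton hΨ]
      calc Module.finrank ℂ K ≤ Module.finrank ℂ (f.maxGenEigenspace 1) :=
            Submodule.finrank_mono hKle
        _ = 1 := hsimple
  -- the matrix of p
  set P : Matrix (Fin D) (Fin D) ℂ := LinearMap.toMatrix' p with hPdef
  have hPlin : P.mulVecLin = p := by
    rw [hPdef, ← Matrix.toLin'_apply', Matrix.toLin'_toMatrix']
  have hPvec : ∀ v, P.mulVec v = p v := by
    intro v; rw [← Matrix.mulVecLin_apply, hPlin]
  have hinj : Function.Injective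
      (Matrix.mulVecLin : Matrix (Fin D) (Fin D) ℂ → _) := by
    intro X Y h
    have := congrArg LinearMap.toMatrix' h
    rwa [← Matrix.toLin'_apply', ← Matrix.toLin'_apply' Y,
      LinearMap.toMatrix'_toLin', LinearMap.toMatrix'_toLin'] at this
  have hMP : M * P = P := by
    apply hinj
    rw [Matrix.mulVecLin_mul, hPlin]
    exact LinearMap.ext fun v => hfp v
  have hPM : P * M = P := by
    apply hinj
    rw [Matrix.mulVecLin_mul, hPlin]
    exact LinearMap.ext fun v => hpf v
  have hPP : P * P = P := by
    apply hinj
    rw [Matrix.mulVecLin_mul, hPlin]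
    exact LinearMap.ext fun v => hpp v
  refine ⟨P, hMP, hPM, hPP, by rw [hPvec, hpΨ], ?_, ?_⟩
  · intro v
    obtain ⟨c, hc⟩ := Submodule.mem_span_singleton.mp (hKspan ▸ hpmem v)
    exact ⟨c, by rw [hPvec, ← hc]⟩
  -- spectrum of M - P
  · intro z hz
    have hE : ∀ X : Matrix (Fin D) (Fin D) ℂ, Matrix.toLinAlgEquiv' X = X.mulVecLin := by
      intro X
      exact LinearMap.ext fun v => by
        rw [Matrix.toLinAlgEquiv'_apply, Matrix.mulVecLin_apply]
    have hzEnd : z ∈ spectrum ℂ (f - p) := by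
      have := (AlgEquiv.spectrum_eq (Matrix.toLinAlgEquiv' :
        Matrix (Fin D) (Fin D) ℂ ≃ₐ[ℂ] _) (M - P)).symm ▸ hz
      rwa [map_sub, hE, hE, hPlin] at this
    have hev : Module.End.HasEigenvalue (f - p) z :=
      Module.End.hasEigenvalue_iff_mem_spectrum.mpr hzEnd
    obtain ⟨v, hvmem, hvne⟩ := hev.exists_hasEigenvector
    have hveq : f v - p v = z • v := by
      have := Module.End.mem_eigenspace_iff.mp hvmem
      rwa [LinearMap.sub_apply] at this
    by_cases hz0 : z = 0
    · rw [hz0]; norm_num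
    have hpv : p v = 0 := by
      have h1 : p (f v - p v) = p (z • v) := congrArg p hveq
      rw [map_sub, hpf, hpp, sub_self, map_smul] at h1
      exact (smul_eq_zero.mp h1.symm).resolve_left hz0
    have hfv : f v = z • v := by rw [← hveq, hpv, sub_zero]
    have hzM : z ∈ spectrum ℂ M := by
      have hevf : Module.End.HasEigenvalue f z :=
        Module.End.hasEigenvalue_of_hasEigenvector
          ⟨Module.End.mem_eigenspace_iff.mpr hfv, hvne⟩
      have hmem' := Module.End.hasEigenvalue_iff_mem_spectrum.mp hevf
      have h2 : z ∈ spectrum ℂ (Matrix.toLinAlgEquiv' M) := by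
        rw [hE]; exact hmem'
      rwa [AlgEquiv.spectrum_eq] at h2
    rcases lt_or_eq_of_le (hspec1 z hzM) with h | h
    · exact h
    · exfalso
      have hz1 : z = 1 := hspec2 z hzM h
      rw [hz1, one_smul] at hfv
      have hvK : v ∈ K := by rw [hKdef, LinearMap.mem_ker, hgapp, hfv, sub_self]
      have := hpK v hvK
      rw [hpv] at this
      exact hvne this.symm

set_option maxHeartbeats 2000000 in
/-- Decay of correlations for repeated measurements: the joint measurement probabilities
factorize up to an exponentially small error in the time separation `m - l`. -/
theorem repeated_measurement_decay_of_correlations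
    (D : ℕ) (hD : 0 < D) (𝕄 : Type*) [Fintype 𝕄] [DecidableEq 𝕄]
    (Mm : 𝕄 → Matrix (Fin D) (Fin D) ℂ)
    (Ψ : Fin D → ℂ)
    (hunit : dotProduct (star Ψ) Ψ = 1)
    (hinv : (∑ m, Mm m).mulVec Ψ = Ψ)
    (hspec1 : ∀ z ∈ spectrum ℂ (∑ m, Mm m), ‖z‖ ≤ 1)
    (hspec2 : ∀ z ∈ spectrum ℂ (∑ m, Mm m), ‖z‖ = 1 → z = 1)
    (hsimple : Module.finrank ℂ
      (Module.End.maxGenEigenspace (Matrix.mulVecLin (∑ m, Mm m)) 1) = 1) :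
    ∃ c > (0 : ℝ), ∃ γ > (0 : ℝ), ∀ l m : ℕ, 1 ≤ l → l < m → ∀ S S' : Finset 𝕄,
      ‖dotProduct (star Ψ)
          (((∑ m', Mm m') ^ (l - 1) * (∑ i ∈ S, Mm i) * (∑ m', Mm m') ^ (m - l - 1) *
            (∑ i ∈ S', Mm i)).mulVec Ψ) -
        dotProduct (star Ψ)
            (((∑ m', Mm m') ^ (l - 1) * (∑ i ∈ S, Mm i)).mulVec Ψ) *
          dotProduct (star Ψ)
            (((∑ m', Mm m') ^ (m - 1) * (∑ i ∈ S', Mm i)).mulVec Ψ)‖ ≤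
      c * Real.exp (-γ * (m - l)) := by
  classical
  have hΨ0 : Ψ ≠ 0 := by
    intro h
    rw [h] at hunit
    simp at hunit
  obtain ⟨P, hMP, hPM, hPP, hPΨ, hrank1, hspecN⟩ :=
    aux_proj D (∑ m, Mm m) Ψ hΨ0 hinv hspec1 hspec2 hsimple
  set Mt : Matrix (Fin D) (Fin D) ℂ := ∑ m, Mm m with hMtdef
  -- power identities
  have hMnP : ∀ n : ℕ, Mt ^ n * P = P := by
    intro n
    induction n with
    | zero => rw [pow_zero, one_mul]
    | succ n ih => rw [pow_succ, mul_assoc, hMP, ih]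
  have hpow : ∀ n : ℕ, 1 ≤ n → Mt ^ n - P = (Mt - P) ^ n := by
    intro n hn
    induction n with
    | zero => omega
    | succ n ih =>
      rcases Nat.eq_or_lt_of_le hn with h1 | h1
      · rw [← h1, pow_one, pow_one]
      · have hn' : 1 ≤ n := by omega
        have hx : Mt ^ (n + 1) - P
            = (Mt ^ n - P) * (Mt - P) + (Mt ^ n * P + P * Mt - P * P - P) := by
          rw [pow_succ]; noncomm_ring
        rw [hx, hMnP, hPM, hPP, ih hn', ← pow_succ]
        simp
  -- move to continuous linear maps on Euclidean space
  haveI : Nonempty (Fin D) := ⟨⟨0, hD⟩⟩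
  set e := Matrix.toEuclideanCLM (𝕜 := ℂ) (n := Fin D) with hedef
  have hsr : spectralRadius ℂ (e (Mt - P)) < 1 := by
    have hspec_eq : spectrum ℂ (e (Mt - P)) = spectrum ℂ (Mt - P) :=
      AlgEquiv.spectrum_eq e (Mt - P)
    have hne : (spectrum ℂ (e (Mt - P))).Nonempty := by
      rw [hspec_eq]
      obtain ⟨μ, hμ⟩ := Module.End.exists_eigenvalue ((Mt - P).mulVecLin)
      refine ⟨μ, ?_⟩
      have h1 := Module.End.hasEigenvalue_iff_mem_spectrum.mp hμ
      have h2 : μ ∈ spectrum ℂ (Matrix.toLinAlgEquiv' (Mt - P)) := by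
        have : Matrix.toLinAlgEquiv' (Mt - P) = (Mt - P).mulVecLin :=
          LinearMap.ext fun v => by
            rw [Matrix.toLinAlgEquiv'_apply, Matrix.mulVecLin_apply]
        rw [this]; exact h1
      rwa [AlgEquiv.spectrum_eq] at h2
    have hlt := spectrum.spectralRadius_lt_of_forall_lt_of_nonempty hne
      (r := 1) (fun k hk => by
        rw [hspec_eq] at hk
        have := hspecN k hk
        rw [← NNReal.coe_lt_coe]
        simpa using this)
    simpa using hlt
  obtain ⟨C, hC1le, r, hr0, hr1, hCr⟩ := aux_pow_norm_decay _ hsr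
  -- bridging: scalar quantities are bounded by CLM norms
  set ψ : EuclideanSpace ℂ (Fin D) := (WithLp.equiv 2 _).symm Ψ with hψdef
  have hψnorm : ‖ψ‖ = 1 := by
    have h1 : (inner ℂ ψ ψ : ℂ) = 1 := by
      show dotProduct Ψ (star Ψ) = 1
      rw [dotProduct_comm]
      exact hunit
    have h2 := inner_self_eq_norm_sq (𝕜 := ℂ) ψ
    rw [h1] at h2
    norm_num at h2
    nlinarith [norm_nonneg ψ]
  have hbound : ∀ X : Matrix (Fin D) (Fin D) ℂ,
      ‖dotProduct (star Ψ) (X *ᵥ Ψ)‖ ≤ ‖e X‖ := by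
    intro X
    have h1 : dotProduct (star Ψ) (X *ᵥ Ψ) = (inner ℂ ψ (e X ψ) : ℂ) := by
      show _ = dotProduct (X *ᵥ Ψ) (star Ψ)
      exact dotProduct_comm _ _
    rw [h1]
    calc ‖(inner ℂ ψ (e X ψ) : ℂ)‖ ≤ ‖ψ‖ * ‖e X ψ‖ := norm_inner_le_norm _ _
      _ ≤ ‖ψ‖ * (‖e X‖ * ‖ψ‖) := by
          gcongr
          exact (e X).le_opNorm ψ
      _ = ‖e X‖ := by rw [hψnorm]; ring
  -- constants
  set C0 : ℝ := ‖e P‖ + C with hC0def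
  have hC0ge1 : 1 ≤ C0 := le_add_of_nonneg_of_le (norm_nonneg _) hC1le
  have hC0 : ∀ n : ℕ, ‖e (Mt ^ n)‖ ≤ C0 := by
    intro n
    rcases Nat.eq_zero_or_pos n with h0 | h1
    · subst h0
      rw [pow_zero, map_one]
      calc ‖(1 : EuclideanSpace ℂ (Fin D) →L[ℂ] EuclideanSpace ℂ (Fin D))‖ ≤ 1 := by
            rw [ContinuousLinearMap.one_def]; exact ContinuousLinearMap.norm_id_le
        _ ≤ C0 := hC0ge1
    · have heq : Mt ^ n = (Mt - P) ^ n + P := by rw [← hpow n h1, sub_add_cancel]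
      rw [heq, map_add, map_pow]
      have h2 := hCr n
      have h3 : r ^ n ≤ 1 := pow_le_one₀ hr0.le hr1.le
      have h4 := norm_add_le ((e (Mt - P)) ^ n) (e P)
      have h5 : (0:ℝ) ≤ ‖e P‖ := norm_nonneg _
      have h6 : (0:ℝ) ≤ r ^ n := by positivity
      rw [hC0def]
      nlinarith
  set C1 : ℝ := max C ‖(1 : EuclideanSpace ℂ (Fin D) →L[ℂ] EuclideanSpace ℂ (Fin D)) - e P‖
    with hC1def
  have hC1pos : 0 < C1 := lt_of_lt_of_le (by linarith) (le_max_left _ _)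
  have hC1 : ∀ k : ℕ, ‖e (Mt ^ k - P)‖ ≤ C1 * r ^ k := by
    intro k
    rcases Nat.eq_zero_or_pos k with h0 | h1
    · subst h0
      rw [pow_zero, map_sub, map_one, pow_zero, mul_one]
      exact le_max_right _ _
    · rw [hpow k h1, map_pow]
      calc ‖(e (Mt - P)) ^ k‖ ≤ C * r ^ k := hCr k
        _ ≤ C1 * r ^ k := by gcongr; exact le_max_left _ _
  set K0 : ℝ := (∑ i, ‖e (Mm i)‖) + 1 with hK0def
  have hK0pos : 0 < K0 := by
    have : (0:ℝ) ≤ ∑ i, ‖e (Mm i)‖ := Finset.sum_nonneg fun i _ => norm_nonneg _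
    linarith
  have hK0 : ∀ S : Finset 𝕄, ‖e (∑ i ∈ S, Mm i)‖ ≤ K0 := by
    intro S
    rw [map_sum]
    calc ‖∑ i ∈ S, e (Mm i)‖ ≤ ∑ i ∈ S, ‖e (Mm i)‖ := norm_sum_le _ _
      _ ≤ ∑ i, ‖e (Mm i)‖ :=
          Finset.sum_le_sum_of_subset_of_nonneg (Finset.subset_univ S)
            (fun i _ _ => norm_nonneg _)
      _ ≤ K0 := by rw [hK0def]; linarith
  -- the decay rate
  set γ : ℝ := -Real.log r with hγdef
  have hγpos : 0 < γ := by
    have := Real.log_neg hr0 hr1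
    rw [hγdef]; linarith
  have hexp : ∀ n : ℕ, r ^ n = Real.exp (-γ * n) := by
    intro n
    rw [hγdef, neg_neg, mul_comm, Real.exp_nat_mul, Real.exp_log hr0]
  -- final constant
  set c : ℝ := C0 * K0 ^ 2 * C1 * (1 / r + 1) + 1 with hcdef
  have hcore : 0 ≤ C0 * K0 ^ 2 * C1 * (1 / r + 1) := by
    have h1 : (0:ℝ) ≤ C0 := by linarith
    have h2 : (0:ℝ) ≤ K0 ^ 2 := sq_nonneg _
    have h3 : (0:ℝ) < 1 / r + 1 := by positivity
    positivity
  refine ⟨c, by rw [hcdef]; linarith, γ, hγpos, ?_⟩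
  intro l m hl hlm S S'
  set A : Matrix (Fin D) (Fin D) ℂ := Mt ^ (l - 1) * (∑ i ∈ S, Mm i) with hAdef
  set B : Matrix (Fin D) (Fin D) ℂ := (∑ i ∈ S', Mm i) with hBdef
  obtain ⟨cB, hcB⟩ := hrank1 (B *ᵥ Ψ)
  set k : ℕ := m - l - 1 with hkdef
  set j : ℕ := m - 1 with hjdef
  -- algebraic identity
  have hXPB : ∀ X : Matrix (Fin D) (Fin D) ℂ,
      (X * (P * B)) *ᵥ Ψ = cB • (X *ᵥ Ψ) := by
    intro X
    rw [← Matrix.mulVec_mulVec, ← Matrix.mulVec_mulVec, hcB, Matrix.mulVec_smul]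
  have hPBv : (P * B) *ᵥ Ψ = cB • Ψ := by
    rw [← Matrix.mulVec_mulVec, hcB]
  have hid : dotProduct (star Ψ) ((A * Mt ^ k * B) *ᵥ Ψ)
      - dotProduct (star Ψ) (A *ᵥ Ψ)
        * dotProduct (star Ψ) ((Mt ^ j * B) *ᵥ Ψ)
      = dotProduct (star Ψ) ((A * (Mt ^ k - P) * B) *ᵥ Ψ)
      - dotProduct (star Ψ) (A *ᵥ Ψ)
        * dotProduct (star Ψ) (((Mt ^ j - P) * B) *ᵥ Ψ) := by
    have h1 : A * Mt ^ k * B = A * (Mt ^ k - P) * B + A * (P * B) := by noncomm_ring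
    have h2 : Mt ^ j * B = (Mt ^ j - P) * B + P * B := by noncomm_ring
    rw [h1, h2, Matrix.add_mulVec, Matrix.add_mulVec, dotProduct_add,
      dotProduct_add, hXPB, hPBv, dotProduct_smul, dotProduct_smul,
      hunit, smul_eq_mul, smul_eq_mul, mul_one]
    ring
  -- norm bounds
  have hnA : ‖e A‖ ≤ C0 * K0 := by
    rw [hAdef, map_mul]
    calc ‖e (Mt ^ (l-1)) * e (∑ i ∈ S, Mm i)‖
        ≤ ‖e (Mt ^ (l-1))‖ * ‖e (∑ i ∈ S, Mm i)‖ := norm_mul_le _ _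
      _ ≤ C0 * K0 := mul_le_mul (hC0 _) (hK0 _) (norm_nonneg _) (by linarith)
  have hE1 : ‖dotProduct (star Ψ) ((A * (Mt ^ k - P) * B) *ᵥ Ψ)‖
      ≤ (C0 * K0) * (C1 * r ^ k) * K0 := by
    calc ‖dotProduct (star Ψ) ((A * (Mt ^ k - P) * B) *ᵥ Ψ)‖
        ≤ ‖e (A * (Mt ^ k - P) * B)‖ := hbound _
      _ ≤ ‖e (A * (Mt ^ k - P))‖ * ‖e B‖ := by rw [map_mul]; exact norm_mul_le _ _
      _ ≤ (‖e A‖ * ‖e (Mt ^ k - P)‖) * ‖e B‖ := by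
          gcongr
          rw [map_mul]; exact norm_mul_le _ _
      _ ≤ ((C0 * K0) * (C1 * r ^ k)) * K0 := by
          apply mul_le_mul _ (hK0 _) (norm_nonneg _)
          · positivity
          · exact mul_le_mul hnA (hC1 _) (norm_nonneg _) (by positivity)
  have hα : ‖dotProduct (star Ψ) (A *ᵥ Ψ)‖ ≤ C0 * K0 :=
    le_trans (hbound _) hnA
  have hE2 : ‖dotProduct (star Ψ) (((Mt ^ j - P) * B) *ᵥ Ψ)‖
      ≤ (C1 * r ^ j) * K0 := by
    calc ‖dotProduct (star Ψ) (((Mt ^ j - P) * B) *ᵥ Ψ)‖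
        ≤ ‖e ((Mt ^ j - P) * B)‖ := hbound _
      _ ≤ ‖e (Mt ^ j - P)‖ * ‖e B‖ := by rw [map_mul]; exact norm_mul_le _ _
      _ ≤ (C1 * r ^ j) * K0 := mul_le_mul (hC1 _) (hK0 _) (norm_nonneg _) (by positivity)
  -- arithmetic with the exponents
  have hkj : k + 1 = m - l := by omega
  have hrk : r ^ k ≤ r ^ (m - l) / r := by
    rw [← hkj, pow_succ]
    rw [mul_div_assoc, div_self hr0.ne', mul_one]
  have hrj : r ^ j ≤ r ^ (m - l) := by
    apply pow_le_pow_of_le_one hr0.le hr1.le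
    omega
  have hcast : ((m : ℝ) - (l : ℝ)) = ((m - l : ℕ) : ℝ) := by
    rw [Nat.cast_sub (le_of_lt hlm)]
  -- put it together
  calc ‖dotProduct (star Ψ) ((A * Mt ^ k * B) *ᵥ Ψ)
      - dotProduct (star Ψ) (A *ᵥ Ψ)
        * dotProduct (star Ψ) ((Mt ^ j * B) *ᵥ Ψ)‖
      = ‖dotProduct (star Ψ) ((A * (Mt ^ k - P) * B) *ᵥ Ψ)
      - dotProduct (star Ψ) (A *ᵥ Ψ)
        * dotProduct (star Ψ) (((Mt ^ j - P) * B) *ᵥ Ψ)‖ := by rw [hid]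
    _ ≤ ‖dotProduct (star Ψ) ((A * (Mt ^ k - P) * B) *ᵥ Ψ)‖
      + ‖dotProduct (star Ψ) (A *ᵥ Ψ)‖
        * ‖dotProduct (star Ψ) (((Mt ^ j - P) * B) *ᵥ Ψ)‖ := by
        refine le_trans (norm_sub_le _ _) ?_
        rw [norm_mul]
    _ ≤ (C0 * K0) * (C1 * r ^ k) * K0 + (C0 * K0) * ((C1 * r ^ j) * K0) := by
        refine add_le_add hE1 (mul_le_mul hα hE2 (norm_nonneg _) (by positivity))
    _ ≤ (C0 * K0) * (C1 * (r ^ (m - l) / r)) * K0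
        + (C0 * K0) * ((C1 * r ^ (m - l)) * K0) := by
        gcongr
    _ = (C0 * K0 ^ 2 * C1 * (1 / r + 1)) * r ^ (m - l) := by ring
    _ ≤ c * r ^ (m - l) := by
        have := pow_nonneg hr0.le (m - l)
        rw [hcdef]; nlinarith
    _ = c * Real.exp (-γ * ((m : ℝ) - (l : ℝ))) := by
        rw [hcast, hexp]
  -- done?

end
end

section
/- There is a unique vector Ψ* ∈ ℂ^D with M*Ψ* = Ψ* and ⟨Ψ*, Ψ⟩ = 1 (M* the conjugate-transpose adjoint), and for every m ∈ 𝕄, lim_{N→∞} (1/N) Σ_{j=1}^{N} ⟨Ψ, M^{j−1} M_m Ψ⟩ = ⟨Ψ*, M_m Ψ⟩. (In the repeated measurement interpretation, the expected asymptotic frequency of the outcome m, 𝔼[f_m] = lim (1/N) Σ_{j=1}^N P(X_j = m), exists and equals ⟨Ψ*, M_m Ψ⟩, which is deterministic and independent of the initial data.) -/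
open scoped Matrix
open Complex Filter Topology

noncomputable section

lemma aux_coef (i : ℕ) (μ : ℂ) (hμ : ‖μ‖ < 1) :
    Tendsto (fun n : ℕ => (n.choose i : ℂ) * μ ^ (n - i)) atTop (𝓝 0) := by
  rcases eq_or_ne μ 0 with rfl | hμ0
  · apply Tendsto.congr' _ tendsto_const_nhds
    filter_upwards [Filter.eventually_ge_atTop (i + 1)] with n hn
    have : n - i ≠ 0 := by omega
    simp [zero_pow this]
  · have hr : (0:ℝ) ≤ ‖μ‖ := norm_nonneg μ
    have h0 : Tendsto (fun n : ℕ => ((n : ℝ) ^ i * ‖μ‖ ^ n) * (‖μ‖ ^ i)⁻¹) atTop (𝓝 0) := by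
      simpa using (tendsto_pow_const_mul_const_pow_of_lt_one i hr hμ).mul_const (‖μ‖ ^ i)⁻¹
    apply squeeze_zero_norm' _ h0
    filter_upwards [Filter.eventually_ge_atTop i] with n hn
    have h1 : ‖(n.choose i : ℂ) * μ ^ (n - i)‖ = (n.choose i : ℝ) * ‖μ‖ ^ (n - i) := by
      simp [norm_mul, norm_pow]
    rw [h1]
    have h2 : (n.choose i : ℝ) ≤ (n : ℝ) ^ i := by
      exact_mod_cast Nat.choose_le_pow n i
    have h3 : ‖μ‖ ^ (n - i) = ‖μ‖ ^ n * (‖μ‖ ^ i)⁻¹ :=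
      pow_sub₀ _ (norm_ne_zero_iff.mpr hμ0) hn
    rw [h3, ← mul_assoc]
    apply mul_le_mul_of_nonneg_right _ (by positivity)
    exact mul_le_mul_of_nonneg_right h2 (by positivity)

lemma aux_pow_tendsto {D : ℕ} (T : Module.End ℂ (Fin D → ℂ)) (μ : ℂ) (hμ : ‖μ‖ < 1)
    (x : Fin D → ℂ) (hx : x ∈ T.maxGenEigenspace μ) :
    Tendsto (fun n : ℕ => (T ^ n) x) atTop (𝓝 0) := by
  obtain ⟨k, hk⟩ := (T.mem_maxGenEigenspace μ x).mp hx
  set N : Module.End ℂ (Fin D → ℂ) := T - μ • 1 with hN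
  have hNk : ∀ i, k ≤ i → (N ^ i) x = 0 := by
    intro i hi
    have : N ^ i = N ^ (i - k) * N ^ k := by rw [← pow_add]; congr 1; omega
    rw [this]
    simp only [Module.End.mul_apply, hk, map_zero]
  have hcomm : Commute N (μ • (1 : Module.End ℂ (Fin D → ℂ))) :=
    (Commute.one_right N).smul_right μ
  have key : ∀ n : ℕ, (T ^ n) x
      = ∑ i ∈ Finset.range k, ((n.choose i : ℂ) * μ ^ (n - i)) • ((N ^ i) x) := by
    intro n
    have hT : T = N + μ • 1 := by rw [hN]; abel
    have h1 : T ^ n = ∑ i ∈ Finset.range (n + 1),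
        N ^ i * (μ • (1 : Module.End ℂ (Fin D → ℂ))) ^ (n - i) * (n.choose i : Module.End ℂ (Fin D → ℂ)) := by
      rw [hT, hcomm.add_pow]
    have h2 : (T ^ n) x = ∑ i ∈ Finset.range (n + 1),
        ((n.choose i : ℂ) * μ ^ (n - i)) • ((N ^ i) x) := by
      rw [h1]
      rw [LinearMap.sum_apply]
      refine Finset.sum_congr rfl fun i _ => ?_
      have : (μ • (1 : Module.End ℂ (Fin D → ℂ))) ^ (n - i) = μ ^ (n - i) • 1 := by
        rw [smul_pow, one_pow]
      rw [this]
      simp only [Module.End.mul_apply, Module.End.natCast_apply, LinearMap.smul_apply,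
        Module.End.one_apply, map_smul, map_nsmul]
      rw [← Nat.cast_smul_eq_nsmul ℂ, smul_smul]
    rw [h2]
    rcases le_or_gt (n + 1) k with h | h
    · apply Finset.sum_subset (Finset.range_subset_range.mpr h)
      intro i _ hi
      have : n < i := by simp only [Finset.mem_range, not_lt] at hi; omega
      simp [Nat.choose_eq_zero_of_lt this]
    · symm
      apply Finset.sum_subset (Finset.range_subset_range.mpr (by omega : k ≤ n + 1))
      intro i _ hi
      have : k ≤ i := by simp only [Finset.mem_range, not_lt] at hi; omega
      simp [hNk i this]
  have : Tendsto (fun n : ℕ => ∑ i ∈ Finset.range k,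
      ((n.choose i : ℂ) * μ ^ (n - i)) • ((N ^ i) x)) atTop (𝓝 0) := by
    have : (0 : Fin D → ℂ) = ∑ i ∈ Finset.range k, (0 : ℂ) • ((N ^ i) x) := by simp
    rw [this]
    exact tendsto_finset_sum _ fun i _ => (aux_coef i μ hμ).smul_const _
  exact Tendsto.congr (fun n => (key n).symm) this

lemma aux_ext {D : ℕ} (a b : Fin D → ℂ)
    (h : ∀ x, dotProduct (star a) x = dotProduct (star b) x) : a = b := by
  funext i
  have h2 := h (Pi.single i 1)
  rw [dotProduct_single, dotProduct_single, mul_one, mul_one] at h2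
  have := congrArg star h2
  simpa using this

lemma aux_repr {D : ℕ} (F : (Fin D → ℂ) →ₗ[ℂ] ℂ) (x : Fin D → ℂ) :
    dotProduct (star (fun i => (starRingEnd ℂ) (F (fun j => if i = j then 1 else 0)))) x
      = F x := by
  conv_rhs => rw [pi_eq_sum_univ x, map_sum]
  simp only [dotProduct, Pi.star_apply, RingHom.id_apply, star_def, conj_conj, map_smul,
    smul_eq_mul]
  exact Finset.sum_congr rfl fun i _ => mul_comm _ _

lemma aux_dot_tendsto {D : ℕ} (c : Fin D → ℂ) {v : ℕ → Fin D → ℂ} {L : Fin D → ℂ}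
    (h : Tendsto v atTop (𝓝 L)) :
    Tendsto (fun n => dotProduct c (v n)) atTop (𝓝 (dotProduct c L)) := by
  simp only [dotProduct]
  exact tendsto_finset_sum _ fun i _ =>
    (tendsto_const_nhds).mul ((tendsto_pi_nhds.mp h) i)

lemma aux_adj {D : ℕ} (A : Matrix (Fin D) (Fin D) ℂ) (v x : Fin D → ℂ) :
    dotProduct (star (Aᴴ.mulVec v)) x = dotProduct (star v) (A.mulVec x) := by
  rw [Matrix.star_mulVec, Matrix.conjTranspose_conjTranspose, ← Matrix.dotProduct_mulVec]

/-- Asymptotic measurement frequencies: there is a unique vector `Ψ*` invariant under `M⋆`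
and normalized against `Ψ`, and the expected frequency of each measurement outcome `m`
exists and equals `⟨Ψ*, M_m Ψ⟩`. -/
theorem repeated_measurement_frequencies
    (D : ℕ) (hD : 0 < D) (𝕄 : Type*) [Fintype 𝕄] [DecidableEq 𝕄]
    (Mm : 𝕄 → Matrix (Fin D) (Fin D) ℂ)
    (Ψ : Fin D → ℂ)
    (hunit : dotProduct (star Ψ) Ψ = 1)
    (hinv : (∑ m, Mm m).mulVec Ψ = Ψ)
    (hspec1 : ∀ z ∈ spectrum ℂ (∑ m, Mm m), ‖z‖ ≤ 1)
    (hspec2 : ∀ z ∈ spectrum ℂ (∑ m, Mm m), ‖z‖ = 1 → z = 1)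
    (hsimple : Module.finrank ℂ
      (Module.End.maxGenEigenspace (Matrix.mulVecLin (∑ m, Mm m)) 1) = 1) :
    ∃ Ψstar : Fin D → ℂ,
      ((∑ m, Mm m)ᴴ.mulVec Ψstar = Ψstar ∧
        dotProduct (star Ψstar) Ψ = 1 ∧
        ∀ φ : Fin D → ℂ, (∑ m, Mm m)ᴴ.mulVec φ = φ →
          dotProduct (star φ) Ψ = 1 → φ = Ψstar) ∧
      ∀ m : 𝕄,
        Tendsto
          (fun N : ℕ => ((N : ℂ))⁻¹ *
            ∑ j ∈ Finset.range N,
              dotProduct (star Ψ) (((∑ m', Mm m') ^ j * Mm m).mulVec Ψ))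
          atTop
          (𝓝 (dotProduct (star Ψstar) ((Mm m).mulVec Ψ))) := by
  classical
  set M : Matrix (Fin D) (Fin D) ℂ := ∑ m, Mm m with hMdef
  set T : Module.End ℂ (Fin D → ℂ) := M.mulVecLin with hTdef
  have hTapp : ∀ v, T v = M.mulVec v := fun v => rfl
  have hΨne : Ψ ≠ 0 := by
    intro h; rw [h] at hunit; simp at hunit
  have hTΨ : T Ψ = Ψ := hinv
  have hTnΨ : ∀ n : ℕ, (T ^ n) Ψ = Ψ := by
    intro n
    induction n with
    | zero => rfl
    | succ n ih => rw [pow_succ, Module.End.mul_apply, hTΨ, ih]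
  have hTpow : ∀ (j : ℕ) (v : Fin D → ℂ), (T ^ j) v = (M ^ j).mulVec v := by
    intro j
    induction j with
    | zero => intro v; rw [pow_zero, pow_zero, Matrix.one_mulVec]; rfl
    | succ j ih =>
        intro v
        rw [pow_succ, pow_succ, Module.End.mul_apply, hTapp, ih, Matrix.mulVec_mulVec]
  have hspecT : ∀ μ : ℂ, T.HasEigenvalue μ → μ ∈ spectrum ℂ M := by
    intro μ hμ
    have h1 : μ ∈ spectrum ℂ T := Module.End.hasEigenvalue_iff_mem_spectrum.mp hμ
    have h2 : T = Matrix.toLinAlgEquiv' M := rfl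
    rw [h2, AlgEquiv.spectrum_eq] at h1
    exact h1
  set E := T.maxGenEigenspace 1 with hEdef
  set W := ⨆ μ : {μ : ℂ // μ ≠ 1}, T.maxGenEigenspace ↑μ with hWdef
  have hΨE : Ψ ∈ E := by
    rw [hEdef, Module.End.mem_maxGenEigenspace]
    refine ⟨1, ?_⟩
    rw [pow_one]
    simp [LinearMap.sub_apply, hTΨ]
  have hlt : ∀ μ : ℂ, μ ≠ 1 → ∀ x ∈ T.maxGenEigenspace μ,
      Tendsto (fun n : ℕ => (T ^ n) x) atTop (𝓝 0) := by
    intro μ hμ1 x hx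
    by_cases hx0 : x = 0
    · simpa [hx0] using (tendsto_const_nhds : Tendsto (fun _ : ℕ => (0 : Fin D → ℂ)) atTop _)
    · obtain ⟨k, hk⟩ := (T.mem_maxGenEigenspace μ x).mp hx
      have hgen : T.HasGenEigenvalue μ k := by
        rw [Module.End.hasGenEigenvalue_iff]
        intro hbot
        have hmem : x ∈ T.genEigenspace μ k := Module.End.mem_genEigenspace_nat.mpr hk
        rw [hbot] at hmem
        exact hx0 ((Submodule.mem_bot ℂ).mp hmem)
      have hsp := hspecT μ (Module.End.hasEigenvalue_of_hasGenEigenvalue hgen)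
      have hlt1 : ‖μ‖ < 1 :=
        lt_of_le_of_ne (hspec1 μ hsp) (fun h => hμ1 (hspec2 μ hsp h))
      exact aux_pow_tendsto T μ hlt1 x hx
  have hW0 : ∀ w ∈ W, Tendsto (fun n : ℕ => (T ^ n) w) atTop (𝓝 0) := by
    intro w hw
    refine Submodule.iSup_induction (motive := fun z => Tendsto (fun n : ℕ => (T ^ n) z) atTop (𝓝 0))
      _ hw (fun μ x hx => hlt μ.1 μ.2 x hx) ?_ ?_
    · simpa using (tendsto_const_nhds : Tendsto (fun _ : ℕ => (0 : Fin D → ℂ)) atTop _)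
    · intro x y hx hy
      have := hx.add hy
      simpa using this
  have hWinv : ∀ w ∈ W, T w ∈ W := by
    intro w hw
    refine Submodule.iSup_induction (motive := fun z => T z ∈ W) _ hw ?_ ?_ ?_
    · intro μ x hx
      have hmap := Module.End.mapsTo_maxGenEigenspace_of_comm (Commute.refl T) μ.1
      exact Submodule.mem_iSup_of_mem μ (hmap hx)
    · show T 0 ∈ W
      rw [map_zero]; exact zero_mem W
    · intro x y hx hy
      show T (x + y) ∈ W
      rw [map_add]; exact add_mem hx hy
  have hdisj : Disjoint E W := by
    have h := T.independent_maxGenEigenspace (1 : ℂ)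
    refine h.mono_right ?_
    rw [hWdef]
    refine iSup_le fun μ => ?_
    exact le_iSup_of_le μ.1 (le_iSup_of_le μ.2 le_rfl)
  have hcodisj : Codisjoint E W := by
    rw [codisjoint_iff_le_sup, ← Module.End.iSup_maxGenEigenspace_eq_top T]
    refine iSup_le fun μ => ?_
    by_cases h1 : μ = 1
    · subst h1; exact le_sup_left
    · exact le_sup_of_le_right (le_iSup_of_le ⟨μ, h1⟩ le_rfl)
  have hcompl : IsCompl E W := ⟨hdisj, hcodisj⟩
  set π : (Fin D → ℂ) →ₗ[ℂ] (Fin D → ℂ) :=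
    E.subtype ∘ₗ Submodule.projectionOnto E W hcompl with hπdef
  have hπmem : ∀ x, π x ∈ E := fun x => (Submodule.projectionOnto E W hcompl x).2
  have hπE : ∀ x ∈ E, π x = x := by
    intro x hx
    exact congrArg Subtype.val (Submodule.projectionOnto_apply_left hcompl ⟨x, hx⟩)
  have hπW : ∀ x ∈ W, π x = 0 := by
    intro x hx
    have h : Submodule.projectionOnto E W hcompl x = 0 :=
      (Submodule.projectionOnto_apply_eq_zero_iff hcompl).mpr hx
    show (Submodule.projectionOnto E W hcompl x : Fin D → ℂ) = 0
    rw [h]; rfl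
  have hsubW : ∀ x, x - π x ∈ W := by
    intro x
    rw [← Submodule.projectionOnto_apply_eq_zero_iff hcompl, map_sub]
    have h := Submodule.projectionOnto_apply_left hcompl
      (Submodule.projectionOnto E W hcompl x)
    rw [show Submodule.projectionOnto E W hcompl (π x)
        = Submodule.projectionOnto E W hcompl x from h]
    exact sub_self _
  have hEspan : E = Submodule.span ℂ {Ψ} := by
    symm
    apply Submodule.eq_of_le_of_finrank_eq
    · rw [Submodule.span_singleton_le_iff_mem]; exact hΨE
    · rw [finrank_span_singleton hΨne, hsimple]
  set F : (Fin D → ℂ) →ₗ[ℂ] ℂ :=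
    { toFun := fun x => dotProduct (star Ψ) (π x)
      map_add' := by
        intro a b
        show dotProduct (star Ψ) (π (a + b))
          = dotProduct (star Ψ) (π a) + dotProduct (star Ψ) (π b)
        rw [map_add, dotProduct_add]
      map_smul' := by
        intro c a
        show dotProduct (star Ψ) (π (c • a)) = c • dotProduct (star Ψ) (π a)
        rw [map_smul, dotProduct_smul] } with hFdef
  have hπF : ∀ x, π x = F x • Ψ := by
    intro x
    obtain ⟨c, hc⟩ := Submodule.mem_span_singleton.mp (hEspan ▸ hπmem x)
    have hFx : F x = c := by
      show dotProduct (star Ψ) (π x) = c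
      rw [← hc, dotProduct_smul, hunit, smul_eq_mul, mul_one]
    rw [hFx]; exact hc.symm
  have hFΨ : F Ψ = 1 := by
    show dotProduct (star Ψ) (π Ψ) = 1
    rw [hπE Ψ hΨE, hunit]
  have hπT : ∀ x, π (T x) = π x := by
    intro x
    have hTπ : T (π x) = π x := by
      rw [hπF x, map_smul, hTΨ, ← hπF x]
    have hdec : T x = π x + T (x - π x) := by
      rw [map_sub, hTπ]
      abel
    rw [hdec, map_add, hπE _ (hπmem x), hπW _ (hWinv _ (hsubW x)), add_zero]
  have hFT : ∀ x, F (T x) = F x := by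
    intro x
    show dotProduct (star Ψ) (π (T x)) = dotProduct (star Ψ) (π x)
    rw [hπT x]
  have hlim : ∀ y, Tendsto (fun n : ℕ => (T ^ n) y) atTop (𝓝 (π y)) := by
    intro y
    have h1 : ∀ n : ℕ, (T ^ n) y = π y + (T ^ n) (y - π y) := by
      intro n
      have hTnπ : (T ^ n) (π y) = π y := by
        rw [hπF y, map_smul, hTnΨ n, ← hπF y]
      rw [map_sub, hTnπ]
      abel
    have h2 := (tendsto_const_nhds : Tendsto (fun _ : ℕ => π y) atTop (𝓝 (π y))).add
      (hW0 _ (hsubW y))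
    rw [add_zero] at h2
    exact Tendsto.congr (fun n => (h1 n).symm) h2
  set Ψstar : Fin D → ℂ :=
    fun i => (starRingEnd ℂ) (F (fun j => if i = j then 1 else 0)) with hΨstardef
  have hrep : ∀ x, dotProduct (star Ψstar) x = F x := fun x => aux_repr F x
  refine ⟨Ψstar, ⟨?_, ?_, ?_⟩, ?_⟩
  · apply aux_ext
    intro x
    rw [aux_adj, hrep (M.mulVec x), hrep x]
    exact hFT x
  · rw [hrep Ψ]; exact hFΨ
  · intro φ hφ1 hφ2
    apply aux_ext
    intro x
    have hG : ∀ z, dotProduct (star φ) (T z) = dotProduct (star φ) z := by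
      intro z
      rw [hTapp, ← aux_adj, hφ1]
    have hGn : ∀ (n : ℕ) z,
        dotProduct (star φ) ((T ^ n) z) = dotProduct (star φ) z := by
      intro n
      induction n with
      | zero => intro z; rw [pow_zero]; rfl
      | succ n ih => intro z; rw [pow_succ, Module.End.mul_apply, ih, hG]
    have hconv := aux_dot_tendsto (star φ) (hlim x)
    have hconst : Tendsto (fun _ : ℕ => dotProduct (star φ) x) atTop
        (𝓝 (dotProduct (star φ) (π x))) :=
      Tendsto.congr (fun n => hGn n x) hconv
    have hxπ : dotProduct (star φ) x = dotProduct (star φ) (π x) :=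
      tendsto_nhds_unique tendsto_const_nhds hconst
    rw [hxπ, hπF x, dotProduct_smul, hφ2, smul_eq_mul, mul_one, hrep x]
  · intro m
    set y := (Mm m).mulVec Ψ with hy
    have hterm : ∀ j : ℕ, dotProduct (star Ψ) ((M ^ j * Mm m).mulVec Ψ)
        = dotProduct (star Ψ) ((T ^ j) y) := by
      intro j
      rw [hTpow j y, hy, Matrix.mulVec_mulVec]
    have hu : Tendsto (fun j : ℕ => dotProduct (star Ψ) ((T ^ j) y)) atTop
        (𝓝 (dotProduct (star Ψ) (π y))) := aux_dot_tendsto _ (hlim y)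
    have hL : dotProduct (star Ψ) (π y) = dotProduct (star Ψstar) y :=
      (hrep y).symm
    rw [← hL]
    have hc := (Tendsto.congr (fun j => (hterm j).symm) hu).cesaro_smul
    apply hc.congr
    intro N
    rw [Complex.real_smul, Complex.ofReal_inv, Complex.ofReal_natCast]

end
end
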